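/- arXiv:1909.08892 — 3 statements merged into one kernel-verified Lean document; each statement's English description precedes it below -/
import Mathlib

section
/- For the biofilm model with m = 1/2, the matrix h''(u)A(u) is positive definite on the open Gibbs simplex: z^⊤ h''(u)A(u) z ≥ Σ_{i=1}^n z_i²/u_i^{2m} for all u ∈ D and z ∈ ℝ^n, with constant c_h = 1. -/
open Real Finset Matrix

/-- Biofilm model with `m = 1/2`: `zᵀ h''(u) A(u) z ≥ ∑ i, z_i² / u_i^{2m}` on the
open Gibbs simplex, with constant `c_h = 1`. -/
theorem biofilm_quadratic_form_positive (n : ℕ) (hn : 1 ≤ n) (u : Fin n → ℝ)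
    (hu : (∀ i, 0 < u i ∧ u i < 1) ∧ ∑ i, u i < 1) (z : Fin n → ℝ) :
    let A : Matrix (Fin n) (Fin n) ℝ := fun i j => if i = j then 1 - u i else -u i
    let H : Matrix (Fin n) (Fin n) ℝ :=
      fun i j => (if i = j then 1 / u i else 0) + 1 / (1 - ∑ k, u k)
    let m : ℝ := 1 / 2
    z ⬝ᵥ (H * A).mulVec z ≥ 1 * ∑ i, z i ^ 2 / u i ^ (2 * m) := by
  intro A H m
  obtain ⟨hpos, hsum⟩ := hu
  have hS0 : (1 - ∑ k, u k) ≠ 0 := by linarith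
  have hu0 : ∀ i, u i ≠ 0 := fun i => (hpos i).1.ne'
  have hAcol : ∀ j, ∑ k, A k j = 1 - ∑ k, u k := by
    intro j
    have : ∀ k, A k j = (if k = j then (1:ℝ) else 0) - u k := by
      intro k; simp only [A]; by_cases h : k = j <;> simp [h] <;> ring
    simp [this, Finset.sum_sub_distrib]
  have hHA : ∀ i j, (H * A) i j = if i = j then 1 / u i else 0 := by
    intro i j
    have : (H * A) i j = ∑ k, H i k * A k j := rfl
    rw [this]
    have expand : ∀ k, H i k * A k j
        = (if i = k then (1 / u i) * A k j else 0) + (1 / (1 - ∑ l, u l)) * A k j := by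
      intro k; simp only [H]; by_cases h : i = k <;> simp [h] <;> ring
    rw [Finset.sum_congr rfl (fun k _ => expand k), Finset.sum_add_distrib,
      Finset.sum_ite_eq, ← Finset.mul_sum, hAcol]
    simp only [Finset.mem_univ, if_true, one_div, inv_mul_cancel₀ hS0]
    by_cases h : i = j
    · subst h
      simp only [A, if_pos rfl, if_pos rfl]
      field_simp [hu0 i]
      simp [hu0 i]
    · simp only [A, if_neg h, if_neg h]
      rw [mul_neg, inv_mul_cancel₀ (hu0 i)]
      ring
  have hform : z ⬝ᵥ (H * A).mulVec z = ∑ i, z i ^ 2 / u i := by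
    have hmv : ∀ i, (H * A).mulVec z i = 1 / u i * z i := by
      intro i
      simp only [Matrix.mulVec, dotProduct, hHA]
      rw [Finset.sum_congr rfl (fun j _ => by rw [ite_mul, zero_mul]),
        Finset.sum_ite_eq]
      simp
    simp only [dotProduct, hmv]
    exact Finset.sum_congr rfl fun i _ => by field_simp [hu0 i]
  have hpow : ∀ i, u i ^ (2 * m) = u i := by
    intro i
    have : (2 : ℝ) * m = 1 := by norm_num [m]
    rw [this, Real.rpow_one]
  rw [hform, one_mul]
  exact le_of_eq (Finset.sum_congr rfl (fun i _ => by rw [hpow i]))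
end

section
/- For the three-species Maxwell–Stefan system with diffusion coefficients d_0, d_1, d_2 > 0, for all u in the open Gibbs simplex D ⊂ ℝ² and all z ∈ ℝ², the quadratic form satisfies z^⊤ h''(u)A(u) z = d_2 z_1²/(u_1 a(u)) + d_1 z_2²/(u_2 a(u)) + d_0 (z_1+z_2)²/(u_3 a(u)), where a(u) = d_0 d_1 u_1 + d_0 d_2 u_2 + d_1 d_2 u_3 and u_3 = 1 − u_1 − u_2. -/
open Real Matrix

set_option maxHeartbeats 1000000

/-- Three-species Maxwell–Stefan system: the quadratic form identity
`zᵀ h''(u) A(u) z = d₂ z₁²/(u₁ a(u)) + d₁ z₂²/(u₂ a(u)) + d₀ (z₁+z₂)²/(u₃ a(u))`,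
where `u₃ = 1 - u₁ - u₂` and `a(u) = d₀d₁u₁ + d₀d₂u₂ + d₁d₂u₃`. -/
theorem maxwell_stefan_quadratic_form (d0 d1 d2 : ℝ)
    (hd0 : 0 < d0) (hd1 : 0 < d1) (hd2 : 0 < d2)
    (u1 u2 : ℝ) (hu1 : 0 < u1) (hu1' : u1 < 1) (hu2 : 0 < u2) (hu2' : u2 < 1)
    (hsum : u1 + u2 < 1) (z1 z2 : ℝ) :
    let u3 : ℝ := 1 - u1 - u2
    let a : ℝ := d0 * d1 * u1 + d0 * d2 * u2 + d1 * d2 * u3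
    let A : Matrix (Fin 2) (Fin 2) ℝ :=
      (1 / a) • !![d2 + (d0 - d2) * u1, (d0 - d1) * u1;
                   (d0 - d2) * u2, d1 + (d0 - d1) * u2]
    let H : Matrix (Fin 2) (Fin 2) ℝ :=
      !![1 / u1 + 1 / u3, 1 / u3; 1 / u3, 1 / u2 + 1 / u3]
    let z : Fin 2 → ℝ := ![z1, z2]
    z ⬝ᵥ (H * A).mulVec z =
      d2 * z1 ^ 2 / (u1 * a) + d1 * z2 ^ 2 / (u2 * a) +
        d0 * (z1 + z2) ^ 2 / (u3 * a) := by
  intro u3 a A H z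
  have hu3 : 0 < u3 := by simp only [u3]; linarith
  have ha : 0 < a := by
    have : 0 < d0 * d1 * u1 := by positivity
    have : 0 < d0 * d2 * u2 := by positivity
    have : 0 < d1 * d2 * u3 := by positivity
    simp only [a]; linarith
  have hu3' : u3 ≠ 0 := ne_of_gt hu3
  have ha' : a ≠ 0 := ne_of_gt ha
  have hau3 : a = d0 * d1 * u1 + d0 * d2 * u2 + d1 * d2 * u3 := rfl
  simp only [A, H, z, Matrix.mul_apply, Matrix.mulVec, dotProduct,
    Fin.sum_univ_two, Matrix.smul_apply, Matrix.of_apply, Matrix.cons_val',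
    Matrix.cons_val_zero, Matrix.cons_val_one, Matrix.head_cons,
    Matrix.head_fin_const, Matrix.empty_val', Matrix.cons_val_fin_one,
    Matrix.mul_apply, smul_eq_mul]
  clear_value a
  unfold u3 at hu3' ⊢
  field_simp
  ring
end

section
/- For the biofilm model, the regularized quadratic form satisfies the exact decomposition z^⊤ h''(u^δ)A(u)z − Σ_{i=1}^n z_i²/u_i^δ = Σ_{i,j=1}^n (u_{n+1}/u_{n+1}^δ − u_i/u_i^δ) z_i z_j =: z^⊤ R_δ(u) z, for all u in the open Gibbs simplex and z ∈ ℝ^n, where u_i^δ = (u_i + δ/n)/(1+δ) and u_{n+1}^δ = u_{n+1}/(1+δ) with u_{n+1} = 1 − Σ u_k. -/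
open Finset Matrix

/-- Biofilm model, regularized quadratic form decomposition:
`zᵀ h''(u^δ) A(u) z − ∑ i, z_i²/u_i^δ = ∑ i j, (u_{n+1}/u_{n+1}^δ − u_i/u_i^δ) z_i z_j`,
for `u` in the open Gibbs simplex, with `u_i^δ = (u_i + δ/n)/(1+δ)` and
`u_{n+1}^δ = u_{n+1}/(1+δ)`, `u_{n+1} = 1 − ∑ u_k`. -/
theorem biofilm_regularized_decomposition (n : ℕ) (hn : 1 ≤ n) (δ : ℝ) (hδ : 0 < δ)
    (u : Fin n → ℝ) (hu : (∀ i, 0 < u i ∧ u i < 1) ∧ ∑ i, u i < 1) (z : Fin n → ℝ) :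
    let ud : Fin n → ℝ := fun i => (u i + δ / n) / (1 + δ)
    let un1 : ℝ := 1 - ∑ k, u k
    let un1d : ℝ := un1 / (1 + δ)
    let A : Matrix (Fin n) (Fin n) ℝ := fun i j => if i = j then 1 - u i else -u i
    let H : Matrix (Fin n) (Fin n) ℝ :=
      fun i j => (if i = j then 1 / ud i else 0) + 1 / un1d
    z ⬝ᵥ (H * A).mulVec z - ∑ i, z i ^ 2 / ud i =
      ∑ i, ∑ j, (un1 / un1d - u i / ud i) * z i * z j := by
  intro ud un1 un1d A H
  have hun1 : un1 = 1 - ∑ k, u k := rfl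
  have key : ∀ i j, (H * A) i j =
      (if i = j then 1 / ud i else 0) + (un1 / un1d - u i / ud i) := by
    intro i j
    rw [Matrix.mul_apply]
    simp only [H, A]
    have h1 : ∀ k, ((if i = k then 1 / ud i else 0) + 1 / un1d) *
        (if k = j then 1 - u k else -u k)
        = (if i = k then (1 / ud i) * (if k = j then 1 - u k else -u k) else 0)
          + (1 / un1d) * ((if k = j then (1:ℝ) else 0) - u k) := by
      intro k
      split_ifs <;> ring
    rw [Finset.sum_congr rfl fun k _ => h1 k, Finset.sum_add_distrib,
      Finset.sum_ite_eq, ← Finset.mul_sum, Finset.sum_sub_distrib,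
      Finset.sum_ite_eq' Finset.univ j (fun _ => (1:ℝ))]
    simp only [Finset.mem_univ, if_true, ← hun1]
    by_cases h : i = j <;> simp [h] <;> ring
  have expand : ∀ i, ∑ j, ((if i = j then 1 / ud i else 0)
        + (un1 / un1d - u i / ud i)) * z j
      = (1 / ud i) * z i + (un1 / un1d - u i / ud i) * ∑ j, z j := by
    intro i
    simp only [add_mul, Finset.sum_add_distrib, ite_mul, zero_mul,
      Finset.sum_ite_eq, Finset.mem_univ, if_true, ← Finset.mul_sum]
  have lhs : z ⬝ᵥ (H * A).mulVec z
      = ∑ i, z i * ((1 / ud i) * z i + (un1 / un1d - u i / ud i) * ∑ j, z j) := by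
    simp only [dotProduct, mulVec]
    exact Finset.sum_congr rfl fun i _ => by rw [Finset.sum_congr rfl fun j _ => by
      rw [key i j], expand i]
  rw [lhs, ← Finset.sum_sub_distrib]
  refine Finset.sum_congr rfl fun i _ => ?_
  conv_rhs => rw [← Finset.mul_sum]
  ring
end
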